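/- arXiv:2105.08268 — 5 statements merged into one kernel-verified Lean document; each statement's English description precedes it below -/
import Mathlib

section
/- Let Q : S^N × A^N → ℝ be the unique solution of the Bellman optimality equation Q(s,a) = r(s,a) + γ ∑_{s'} P(s'|s,a) max_{a'} Q(s',a'), where the reward r and transition kernel P are permutation invariant, i.e., r(s,a) = r(κ(s),κ(a)) and P(s'|s,a) = P(κ(s')|κ(s),κ(a)) for every permutation κ of the N coordinates. Then Q is permutation invariant: Q(s,a) = Q(κ(s),κ(a)) for all permutations κ. -/
/-- The unique solution of the Bellman optimality equation of a permutation-invariant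
MDP is permutation invariant. -/
theorem stmt_0 {S A : Type*} [Fintype S] [Fintype A] [Nonempty S] [Nonempty A] {N : ℕ}
    (γ : ℝ) (hγ0 : 0 ≤ γ) (hγ1 : γ < 1)
    (r : (Fin N → S) → (Fin N → A) → ℝ)
    (P : (Fin N → S) → (Fin N → A) → (Fin N → S) → ℝ)
    (hr : ∀ (κ : Equiv.Perm (Fin N)) (s : Fin N → S) (a : Fin N → A),
      r s a = r (s ∘ κ) (a ∘ κ))
    (hP : ∀ (κ : Equiv.Perm (Fin N)) (s : Fin N → S) (a : Fin N → A) (s' : Fin N → S),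
      P s a s' = P (s ∘ κ) (a ∘ κ) (s' ∘ κ))
    (Q : (Fin N → S) → (Fin N → A) → ℝ)
    (hQ : ∀ s a, Q s a = r s a + γ * ∑ s' : Fin N → S, P s a s' *
      Finset.univ.sup' Finset.univ_nonempty (fun a' : Fin N → A => Q s' a'))
    (hUnique : ∀ Q' : (Fin N → S) → (Fin N → A) → ℝ,
      (∀ s a, Q' s a = r s a + γ * ∑ s' : Fin N → S, P s a s' *
        Finset.univ.sup' Finset.univ_nonempty (fun a' : Fin N → A => Q' s' a')) → Q' = Q) :
    ∀ (κ : Equiv.Perm (Fin N)) (s : Fin N → S) (a : Fin N → A),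
      Q s a = Q (s ∘ κ) (a ∘ κ) := by
  intro κ s a
  set Q' : (Fin N → S) → (Fin N → A) → ℝ := fun s a => Q (s ∘ κ) (a ∘ κ) with hQ'def
  have hsup : ∀ t : Fin N → S,
      Finset.univ.sup' Finset.univ_nonempty (fun a' : Fin N → A => Q' t a')
        = Finset.univ.sup' Finset.univ_nonempty (fun a' : Fin N → A => Q (t ∘ κ) a') := by
    intro t
    apply le_antisymm
    · exact Finset.sup'_le _ _ fun b _ => Finset.le_sup' _ (Finset.mem_univ (b ∘ κ))
    · exact Finset.sup'_le _ _ fun b _ =>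
        le_trans (le_of_eq (by simp [hQ'def, Function.comp_assoc])) <|
          Finset.le_sup' (fun a' : Fin N → A => Q' t a') (Finset.mem_univ (b ∘ κ.symm))
  have key : Q' = Q := by
    apply hUnique
    intro s a
    calc Q' s a = r (s ∘ κ) (a ∘ κ) + γ * ∑ s' : Fin N → S, P (s ∘ κ) (a ∘ κ) s' *
        Finset.univ.sup' Finset.univ_nonempty (fun a' : Fin N → A => Q s' a') := hQ _ _
      _ = r s a + γ * ∑ s' : Fin N → S, P s a s' *
        Finset.univ.sup' Finset.univ_nonempty (fun a' : Fin N → A => Q' s' a') := by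
          rw [← hr]
          congr 1
          congr 1
          rw [← Equiv.sum_comp (Equiv.arrowCongr κ.symm (Equiv.refl S))]
          refine Finset.sum_congr rfl fun s' _ => ?_
          have he : (Equiv.arrowCongr κ.symm (Equiv.refl S)) s' = s' ∘ κ := by
            funext i; simp [Equiv.arrowCongr]
          rw [he, ← hP, hsup]
  rw [show Q (s ∘ κ) (a ∘ κ) = Q' s a from rfl, key]
end

section
/- Let A be a finite set, let Q : A → ℝ with ‖Q‖_∞ ≤ r̄, let π, π' be probability distributions on A, and let υ > 0. Then ⟨Q, π' − π⟩ − υ · KL(π' ‖ π) ≤ r̄²/(2υ). -/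
open Finset

/-- Monotonicity helper: if `F` has derivative `F'` on positives and `F' ≥ 0` on `[a,b]`,
then `F a ≤ F b`. -/
lemma mono_aux {F F' : ℝ → ℝ} (hF : ∀ x, 0 < x → HasDerivAt F (F' x) x)
    {a b : ℝ} (ha : 0 < a) (hab : a ≤ b)
    (h' : ∀ x, a ≤ x → x ≤ b → 0 ≤ F' x) : F a ≤ F b := by
  have hsub : Set.Icc a b ⊆ Set.Ioi 0 := fun x hx => lt_of_lt_of_le ha hx.1
  have hmono : MonotoneOn F (Set.Icc a b) := by
    apply monotoneOn_of_deriv_nonneg (convex_Icc a b)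
    · intro x hx
      exact (hF x (hsub hx)).continuousAt.continuousWithinAt
    · intro x hx
      rw [interior_Icc] at hx
      exact (hF x (lt_of_lt_of_le ha hx.1.le)).differentiableAt.differentiableWithinAt
    · intro x hx
      rw [interior_Icc] at hx
      rw [(hF x (lt_of_lt_of_le ha hx.1.le)).deriv]
      exact h' x hx.1.le hx.2.le
  exact hmono (Set.left_mem_Icc.2 hab) (Set.right_mem_Icc.2 hab) hab

lemma g_hasDeriv (t : ℝ) (ht : 0 < t) :
    HasDerivAt (fun t => (t + 1) * Real.log t - 2 * (t - 1)) (Real.log t + t⁻¹ - 1) t := by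
  have h1 : HasDerivAt (fun t : ℝ => t + 1) 1 t := (hasDerivAt_id t).add_const 1
  have h2 := (h1.mul (Real.hasDerivAt_log (ne_of_gt ht)))
  have h3 : HasDerivAt (fun t : ℝ => 2 * (t - 1)) 2 t := by
    simpa using (((hasDerivAt_id t).sub_const 1).const_mul 2)
  have := h2.sub h3
  refine this.congr_deriv ?_
  field_simp
  ring

lemma log_ge (t : ℝ) (ht : 0 < t) : 1 - t⁻¹ ≤ Real.log t := by
  have := Real.log_le_sub_one_of_pos (inv_pos.2 ht)
  rw [Real.log_inv] at this
  linarith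

/-- `g t = (t+1) log t − 2(t−1)` is nonneg for `t ≥ 1` and nonpos for `0 < t ≤ 1`. -/
lemma g_sign_ge (t : ℝ) (ht : 1 ≤ t) : 0 ≤ (t + 1) * Real.log t - 2 * (t - 1) := by
  have := mono_aux g_hasDeriv one_pos ht (fun x hx _ => by
    have hx0 : (0:ℝ) < x := lt_of_lt_of_le one_pos hx
    have := log_ge x hx0; linarith)
  simpa using this

lemma g_sign_le (t : ℝ) (ht0 : 0 < t) (ht : t ≤ 1) :
    (t + 1) * Real.log t - 2 * (t - 1) ≤ 0 := by
  have := mono_aux g_hasDeriv ht0 ht (fun x hx _ => by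
    have := log_ge x (lt_of_lt_of_le ht0 hx); linarith)
  simpa using this

lemma f_hasDeriv (t : ℝ) (ht : 0 < t) :
    HasDerivAt (fun t => (2 * t + 4) * (t * Real.log t - t + 1) - 3 * (t - 1) ^ 2)
      (4 * ((t + 1) * Real.log t - 2 * (t - 1))) t := by
  have h1 : HasDerivAt (fun t : ℝ => 2 * t + 4) 2 t := by
    simpa using (((hasDerivAt_id t).const_mul 2).add_const 4)
  have hlog := Real.hasDerivAt_log (ne_of_gt ht)
  have h2 : HasDerivAt (fun t : ℝ => t * Real.log t - t + 1) (Real.log t) t := by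
    have := (((hasDerivAt_id t).mul hlog).sub (hasDerivAt_id t)).add_const 1
    refine this.congr_deriv ?_
    field_simp
    simp
  have h3 : HasDerivAt (fun t : ℝ => 3 * (t - 1) ^ 2) (3 * (2 * (t - 1))) t := by
    simpa using ((((hasDerivAt_id t).sub_const 1).pow 2).const_mul 3)
  have := (h1.mul h2).sub h3
  refine this.congr_deriv ?_
  ring

/-- Core scalar inequality: `3(t−1)² ≤ (2t+4)(t log t − t + 1)` for `t > 0`. -/
lemma scalar_ineq (t : ℝ) (ht : 0 < t) :
    3 * (t - 1) ^ 2 ≤ (2 * t + 4) * (t * Real.log t - t + 1) := by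
  have hf1 : (2 * (1:ℝ) + 4) * (1 * Real.log 1 - 1 + 1) - 3 * ((1:ℝ) - 1) ^ 2 = 0 := by
    simp
  rcases le_total 1 t with h | h
  · have := mono_aux f_hasDeriv one_pos h (fun x hx _ => by
      have := g_sign_ge x hx; linarith)
    rw [hf1] at this; linarith
  · have := mono_aux (F := fun t => -((2 * t + 4) * (t * Real.log t - t + 1) - 3 * (t - 1) ^ 2))
      (F' := fun t => -(4 * ((t + 1) * Real.log t - 2 * (t - 1))))
      (fun x hx => (f_hasDeriv x hx).neg) ht h (fun x hx hx1 => by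
        have := g_sign_le x (lt_of_lt_of_le ht hx) hx1
        show 0 ≤ -(4 * ((x + 1) * Real.log x - 2 * (x - 1)))
        linarith)
    simp only [neg_sub, hf1] at this
    simp at this
    linarith

/-- Pointwise form: for `x ≥ 0`, `y > 0`: `3(x−y)² ≤ (2x+4y)(x log(x/y) − x + y)`. -/
lemma pointwise_ineq (x y : ℝ) (hx : 0 ≤ x) (hy : 0 < y) :
    3 * (x - y) ^ 2 ≤ (2 * x + 4 * y) * (x * Real.log (x / y) - x + y) := by
  rcases eq_or_lt_of_le hx with h | hx0
  · simp [← h]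
    nlinarith
  · have ht : 0 < x / y := div_pos hx0 hy
    have hB := scalar_ineq (x / y) ht
    have hkey := mul_le_mul_of_nonneg_right hB (sq_nonneg y)
    have e1 : 3 * (x / y - 1) ^ 2 * y ^ 2 = 3 * (x - y) ^ 2 := by
      field_simp
    have e2 : (2 * (x / y) + 4) * (x / y * Real.log (x / y) - x / y + 1) * y ^ 2
        = (2 * x + 4 * y) * (x * Real.log (x / y) - x + y) := by
      have hy' : y ≠ 0 := ne_of_gt hy
      set L := Real.log (x / y)
      field_simp
    rw [e1, e2] at hkey
    exact hkey

/-- Pinsker-based bound: `⟨Q, π' − π⟩ − υ KL(π'‖π) ≤ r̄²/(2υ)`. -/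
theorem stmt_7 {A : Type*} [Fintype A] [Nonempty A]
    (Q : A → ℝ) (rbar : ℝ) (hQ : ∀ a, |Q a| ≤ rbar)
    (π π' : A → ℝ)
    (hπpos : ∀ a, 0 < π a) (hπsum : ∑ a, π a = 1)
    (hπ'nonneg : ∀ a, 0 ≤ π' a) (hπ'sum : ∑ a, π' a = 1)
    (υ : ℝ) (hυ : 0 < υ) :
    (∑ a, Q a * (π' a - π a)) - υ * ∑ a, π' a * Real.log (π' a / π a)
      ≤ rbar ^ 2 / (2 * υ) := by
  set k : A → ℝ := fun a => π' a * Real.log (π' a / π a) - π' a + π a with hk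
  have hpos : ∀ a, (0:ℝ) < 2 * π' a + 4 * π a := by
    intro a; have := hπ'nonneg a; have := hπpos a; linarith
  have hw : ∀ a, (0:ℝ) ≤ (2 * π' a + 4 * π a) / 3 := by
    intro a; have := hpos a; linarith
  have hknn : ∀ a, 0 ≤ k a := by
    intro a
    have h := pointwise_ineq (π' a) (π a) (hπ'nonneg a) (hπpos a)
    have hk' : k a = π' a * Real.log (π' a / π a) - π' a + π a := rfl
    rw [hk']
    nlinarith [sq_nonneg (π' a - π a), hpos a]
  have hd : ∀ a, (π' a - π a) ^ 2 ≤ (2 * π' a + 4 * π a) / 3 * k a := by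
    intro a
    have h := pointwise_ineq (π' a) (π a) (hπ'nonneg a) (hπpos a)
    rw [hk]; simp only
    nlinarith
  set S : ℝ := ∑ a, |π' a - π a| with hS
  -- Cauchy–Schwarz: S² ≤ (∑ (2π'+4π)/3) * (∑ k) = 2 ∑ k
  have habs : ∀ a, |π' a - π a| ≤ Real.sqrt ((2 * π' a + 4 * π a) / 3) * Real.sqrt (k a) := by
    intro a
    rw [← Real.sqrt_sq_eq_abs, ← Real.sqrt_mul (hw a)]
    exact Real.sqrt_le_sqrt (hd a)
  have hcs := Finset.sum_mul_sq_le_sq_mul_sq Finset.univ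
    (fun a => Real.sqrt ((2 * π' a + 4 * π a) / 3)) (fun a => Real.sqrt (k a))
  have hsq1 : ∑ a, Real.sqrt ((2 * π' a + 4 * π a) / 3) ^ 2 = 2 := by
    rw [Finset.sum_congr rfl (fun a _ => Real.sq_sqrt (hw a))]
    rw [show (fun a => (2 * π' a + 4 * π a) / 3) = fun a => (2/3) * π' a + (4/3) * π a by
      funext a; ring]
    rw [Finset.sum_add_distrib, ← Finset.mul_sum, ← Finset.mul_sum, hπ'sum, hπsum]
    norm_num
  have hsq2 : ∑ a, Real.sqrt (k a) ^ 2 = ∑ a, k a :=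
    Finset.sum_congr rfl (fun a _ => Real.sq_sqrt (hknn a))
  have hSle : S ≤ ∑ a, Real.sqrt ((2 * π' a + 4 * π a) / 3) * Real.sqrt (k a) :=
    Finset.sum_le_sum (fun a _ => habs a)
  have hS2 : S ^ 2 ≤ 2 * ∑ a, k a := by
    have hnn : 0 ≤ S := Finset.sum_nonneg (fun a _ => abs_nonneg _)
    calc S ^ 2 ≤ (∑ a, Real.sqrt ((2 * π' a + 4 * π a) / 3) * Real.sqrt (k a)) ^ 2 := by
          apply pow_le_pow_left₀ hnn hSle
      _ ≤ (∑ a, Real.sqrt ((2 * π' a + 4 * π a) / 3) ^ 2) * ∑ a, Real.sqrt (k a) ^ 2 := hcs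
      _ = 2 * ∑ a, k a := by rw [hsq1, hsq2]
  -- ∑ k = KL since ∑(π' - π) = 0
  have hsum0 : ∑ a, (π' a - π a) = 0 := by
    rw [Finset.sum_sub_distrib, hπ'sum, hπsum]; ring
  have hKL : ∑ a, k a = ∑ a, π' a * Real.log (π' a / π a) := by
    rw [hk]
    simp only
    rw [show (fun a => π' a * Real.log (π' a / π a) - π' a + π a)
      = fun a => π' a * Real.log (π' a / π a) - (π' a - π a) by funext a; ring]
    rw [Finset.sum_sub_distrib, hsum0, sub_zero]
  -- first term bound
  have hQbound : (∑ a, Q a * (π' a - π a)) ≤ rbar * S := by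
    rw [hS, Finset.mul_sum]
    apply Finset.sum_le_sum
    intro a _
    calc Q a * (π' a - π a) ≤ |Q a * (π' a - π a)| := le_abs_self _
      _ = |Q a| * |π' a - π a| := abs_mul _ _
      _ ≤ rbar * |π' a - π a| := mul_le_mul_of_nonneg_right (hQ a) (abs_nonneg _)
  -- conclude
  have hKLge : S ^ 2 / 2 ≤ ∑ a, π' a * Real.log (π' a / π a) := by
    rw [← hKL]; linarith
  have : (∑ a, Q a * (π' a - π a)) - υ * ∑ a, π' a * Real.log (π' a / π a)
      ≤ rbar * S - υ * (S ^ 2 / 2) := by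
    have := mul_le_mul_of_nonneg_left hKLge hυ.le
    linarith
  refine this.trans ?_
  rw [le_div_iff₀ (by positivity : (0:ℝ) < 2 * υ)]
  nlinarith [sq_nonneg (rbar - υ * S)]
end

section
/- Three-point lemma for KL-regularized maximization: let A be a finite set, q : A → ℝ, υ > 0, π_k a full-support distribution on A, and let π_{k+1} be the maximizer of ⟨q, π⟩ − υ KL(π ‖ π_k) over distributions π. Then for every distribution π* on A, ⟨q, π* − π_k⟩ ≤ υ [ KL(π* ‖ π_k) − KL(π* ‖ π_{k+1}) − KL(π_{k+1} ‖ π_k) ] + ⟨q, π_{k+1} − π_k⟩. -/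
/-- Three-point lemma for KL-regularized maximization over the simplex. -/
theorem stmt_8 {A : Type*} [Fintype A] [Nonempty A]
    (q : A → ℝ) (υ : ℝ) (hυ : 0 < υ)
    (πk : A → ℝ) (hπkpos : ∀ a, 0 < πk a) (hπksum : ∑ a, πk a = 1)
    (KL : (A → ℝ) → (A → ℝ) → ℝ)
    (hKL : ∀ p r : A → ℝ, KL p r = ∑ a, p a * Real.log (p a / r a))
    (J : (A → ℝ) → ℝ)
    (hJ : ∀ π : A → ℝ, J π = (∑ a, q a * π a) - υ * KL π πk)
    (πk1 : A → ℝ) (hpos : ∀ a, 0 ≤ πk1 a) (hsum : ∑ a, πk1 a = 1)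
    (hmax : ∀ π : A → ℝ, (∀ a, 0 ≤ π a) → (∑ a, π a = 1) → J π ≤ J πk1) :
    ∀ πstar : A → ℝ, (∀ a, 0 ≤ πstar a) → (∑ a, πstar a = 1) →
      ∑ a, q a * (πstar a - πk a)
        ≤ υ * (KL πstar πk - KL πstar πk1 - KL πk1 πk)
          + ∑ a, q a * (πk1 a - πk a) := by
  intro πstar hstarpos hstarsum
  set Z : ℝ := ∑ a, πk a * Real.exp (q a / υ) with hZ
  have hZpos : 0 < Z :=
    Finset.sum_pos (fun a _ => mul_pos (hπkpos a) (Real.exp_pos _)) Finset.univ_nonempty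
  set σ : A → ℝ := fun a => πk a * Real.exp (q a / υ) / Z with hσ
  have hσpos : ∀ a, 0 < σ a :=
    fun a => div_pos (mul_pos (hπkpos a) (Real.exp_pos _)) hZpos
  have hσsum : ∑ a, σ a = 1 := by
    rw [hσ]
    rw [← Finset.sum_div, ← hZ, div_self (ne_of_gt hZpos)]
  have hlogσ : ∀ a, Real.log (σ a) - Real.log (πk a) = q a / υ - Real.log Z := by
    intro a
    rw [hσ]
    rw [Real.log_div (ne_of_gt (mul_pos (hπkpos a) (Real.exp_pos _))) (ne_of_gt hZpos),
      Real.log_mul (ne_of_gt (hπkpos a)) (ne_of_gt (Real.exp_pos _)), Real.log_exp]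
    ring
  -- key identity (times υ): υ KL π σ = υ KL π πk - ∑ q π + υ log Z for distributions π
  have key : ∀ π : A → ℝ, (∀ a, 0 ≤ π a) → (∑ a, π a = 1) →
      υ * KL π σ = υ * KL π πk - (∑ a, q a * π a) + υ * Real.log Z := by
    intro π hp hs
    rw [hKL, hKL, Finset.mul_sum, Finset.mul_sum]
    have hterm : ∀ a ∈ Finset.univ, υ * (π a * Real.log (π a / σ a))
        = υ * (π a * Real.log (π a / πk a)) - q a * π a + υ * (π a * Real.log Z) := by
      intro a _
      rcases eq_or_lt_of_le (hp a) with h0 | h0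
      · simp [← h0]
      · have h1 : Real.log (π a / σ a)
            = Real.log (π a / πk a) - (q a / υ - Real.log Z) := by
          rw [Real.log_div (ne_of_gt h0) (ne_of_gt (hσpos a)),
            Real.log_div (ne_of_gt h0) (ne_of_gt (hπkpos a)), ← hlogσ a]
          ring
        rw [h1]
        field_simp
        ring
    rw [Finset.sum_congr rfl hterm]
    rw [Finset.sum_add_distrib, Finset.sum_sub_distrib, ← Finset.mul_sum,
      ← Finset.mul_sum]
    have hsZ : ∑ i, π i * Real.log Z = Real.log Z := by
      rw [← Finset.sum_mul, hs, one_mul]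
    rw [hsZ]
  have hKLσσ : KL σ σ = 0 := by
    rw [hKL]
    apply Finset.sum_eq_zero
    intro a _
    rw [div_self (ne_of_gt (hσpos a)), Real.log_one, mul_zero]
  -- from maximality: KL πk1 σ ≤ 0
  have hKL1σ : KL πk1 σ ≤ 0 := by
    have h := hmax σ (fun a => (hσpos a).le) hσsum
    rw [hJ, hJ] at h
    have e1 := key σ (fun a => (hσpos a).le) hσsum
    have e2 := key πk1 hpos hsum
    rw [hKLσσ, mul_zero] at e1
    have hmm : υ * KL πk1 σ ≤ υ * 0 := by
      rw [mul_zero]; linarith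
    exact le_of_mul_le_mul_left hmm hυ
  -- Gibbs inequality with equality case: πk1 = σ
  have hfun : πk1 = σ := by
    funext a
    by_contra hne0
    have h : ∃ a0, πk1 a0 ≠ σ a0 := ⟨a, hne0⟩
    obtain ⟨a0, ha0⟩ := h
    have hlt : ∑ a, (πk1 a - σ a) < ∑ a, πk1 a * Real.log (πk1 a / σ a) := by
      apply Finset.sum_lt_sum
      · intro b _
        rcases eq_or_lt_of_le (hpos b) with h0 | h0
        · rw [← h0]; simp; exact (hσpos b).le
        · have hd : 0 < σ b / πk1 b := div_pos (hσpos b) h0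
          have := Real.log_le_sub_one_of_pos hd
          have hlog : Real.log (πk1 b / σ b) = - Real.log (σ b / πk1 b) := by
            rw [← Real.log_inv, inv_div]
          rw [hlog]
          have h2 : σ b / πk1 b * πk1 b = σ b := by field_simp
          nlinarith
      · refine ⟨a0, Finset.mem_univ _, ?_⟩
        rcases eq_or_lt_of_le (hpos a0) with h0 | h0
        · rw [← h0]; simp; exact hσpos a0
        · have hd : 0 < σ a0 / πk1 a0 := div_pos (hσpos a0) h0
          have hne : σ a0 / πk1 a0 ≠ 1 := by
            intro hc
            apply ha0
            field_simp at hc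
            linarith
          have := Real.log_lt_sub_one_of_pos hd hne
          have hlog : Real.log (πk1 a0 / σ a0) = - Real.log (σ a0 / πk1 a0) := by
            rw [← Real.log_inv, inv_div]
          rw [hlog]
          have h2 : σ a0 / πk1 a0 * πk1 a0 = σ a0 := by field_simp
          nlinarith
    rw [Finset.sum_sub_distrib, hsum, hσsum, sub_self] at hlt
    rw [hKL] at hKL1σ
    linarith
  rw [hfun]
  -- now it's an equality
  have e1 := key πstar hstarpos hstarsum
  have e2 := key σ (fun a => (hσpos a).le) hσsum
  rw [hKLσσ, mul_zero] at e2
  have hs1 : ∑ a, q a * (πstar a - πk a)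
      = (∑ a, q a * πstar a) - ∑ a, q a * πk a := by
    rw [← Finset.sum_sub_distrib]; congr 1; ext a; ring
  have hs2 : ∑ a, q a * (σ a - πk a)
      = (∑ a, q a * σ a) - ∑ a, q a * πk a := by
    rw [← Finset.sum_sub_distrib]; congr 1; ext a; ring
  have hexp : υ * (KL πstar πk - KL πstar σ - KL σ πk)
      = υ * KL πstar πk - υ * KL πstar σ - υ * KL σ πk := by ring
  linarith
end

section
/- Performance difference identity: for any two policies π, π' of a discounted MDP with discount γ ∈ [0,1), state space S and finite action space A, E_{s ∼ ν^{π'}} ⟨Q^π(s, ·), π'(·|s) − π(·|s)⟩ = (1−γ)(L(π') − L(π)), where ν^{π'} is the (discounted) stationary state distribution of π', Q^π is the state-action value function of π, and L(π) = E_{s ∼ ν^{π'}} V^π(s). -/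
/-- Performance difference identity (Kakade–Langford): for policies `π`, `π'` of a
finite discounted MDP, `E_{s∼ν^{π'}} ⟨Q^π(s,·), π'(·|s) − π(·|s)⟩
= (1−γ)(L(π') − L(π))` where `ν^{π'}` is the stationary state distribution of `π'`
and `L(μ) = E_{s∼ν^{π'}} V^μ(s)`. -/
theorem stmt_10 {S A : Type*} [Fintype S] [Fintype A]
    (γ : ℝ) (hγ0 : 0 ≤ γ) (hγ1 : γ < 1)
    (r : S → A → ℝ)
    (P : S → A → S → ℝ) (hPnonneg : ∀ s a s', 0 ≤ P s a s')
    (hPsum : ∀ s a, ∑ s', P s a s' = 1)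
    (π π' : S → A → ℝ)
    (hπ : ∀ s, (∀ a, 0 ≤ π s a) ∧ ∑ a, π s a = 1)
    (hπ' : ∀ s, (∀ a, 0 ≤ π' s a) ∧ ∑ a, π' s a = 1)
    -- value and Q functions of π (with the (1−γ)-scaled reward convention)
    (V : S → ℝ) (Q : S → A → ℝ) (hV : ∀ s : S, V s = ∑ a, π s a * Q s a)
    (hQ : ∀ (s : S) (a : A), Q s a = (1 - γ) * r s a + γ * ∑ s', P s a s' * V s')
    -- value and Q functions of π'
    (V' : S → ℝ) (Q' : S → A → ℝ) (hV' : ∀ s : S, V' s = ∑ a, π' s a * Q' s a)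
    (hQ' : ∀ (s : S) (a : A), Q' s a = (1 - γ) * r s a + γ * ∑ s', P s a s' * V' s')
    -- stationary state distribution of π'
    (ν : S → ℝ) (hνnonneg : ∀ s, 0 ≤ ν s) (hνsum : ∑ s, ν s = 1)
    (hstat : ∀ s' : S, ν s' = ∑ s, ∑ a, ν s * π' s a * P s a s') :
    ∑ s, ν s * ∑ a, Q s a * (π' s a - π s a)
      = (1 - γ) * ((∑ s, ν s * V' s) - ∑ s, ν s * V s) := by

  -- Q - Q' = γ ∑ P (V - V')
  have key : ∀ s a, Q s a = Q' s a + γ * ∑ s', P s a s' * (V s' - V' s') := by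
    intro s a
    have h : ∑ s', P s a s' * (V s' - V' s')
        = (∑ s', P s a s' * V s') - ∑ s', P s a s' * V' s' := by
      rw [← Finset.sum_sub_distrib]; exact Finset.sum_congr rfl (fun _ _ => by ring)
    rw [hQ, hQ', h]; ring
  -- triple sum identity from stationarity
  have tri : ∑ s, ν s * ∑ a, π' s a * (γ * ∑ s', P s a s' * (V s' - V' s'))
      = γ * ∑ s', ν s' * (V s' - V' s') := by
    have h1 : ∀ s, ν s * ∑ a, π' s a * (γ * ∑ s', P s a s' * (V s' - V' s'))
        = ∑ a, ∑ s', γ * (ν s * π' s a * P s a s' * (V s' - V' s')) := by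
      intro s; rw [Finset.mul_sum]
      refine Finset.sum_congr rfl fun a _ => ?_
      have e : π' s a * (γ * ∑ s', P s a s' * (V s' - V' s'))
          = ∑ s', γ * (π' s a * P s a s' * (V s' - V' s')) := by
        rw [Finset.mul_sum, Finset.mul_sum]
        exact Finset.sum_congr rfl fun s' _ => by ring
      rw [e, Finset.mul_sum]
      exact Finset.sum_congr rfl fun s' _ => by ring
    simp only [h1]
    have h2 : (∑ s, ∑ a, ∑ s', γ * (ν s * π' s a * P s a s' * (V s' - V' s')))
        = ∑ s, ∑ s', ∑ a, γ * (ν s * π' s a * P s a s' * (V s' - V' s')) :=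
      Finset.sum_congr rfl fun s _ => by rw [Finset.sum_comm]
    rw [h2, Finset.sum_comm, Finset.mul_sum]
    refine Finset.sum_congr rfl fun s' _ => ?_
    rw [hstat s', Finset.sum_mul, Finset.mul_sum]
    refine Finset.sum_congr rfl fun s _ => ?_
    rw [Finset.sum_mul, Finset.mul_sum]
  calc ∑ s, ν s * ∑ a, Q s a * (π' s a - π s a)
      = ∑ s, ν s * ((∑ a, π' s a * Q' s a)
          + (∑ a, π' s a * (γ * ∑ s', P s a s' * (V s' - V' s'))) - V s) := by
        refine Finset.sum_congr rfl (fun s _ => ?_)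
        congr 1
        rw [hV, ← Finset.sum_add_distrib, ← Finset.sum_sub_distrib]
        refine Finset.sum_congr rfl (fun a _ => ?_)
        rw [key s a]; ring
    _ = (∑ s, ν s * V' s)
          + (∑ s, ν s * ∑ a, π' s a * (γ * ∑ s', P s a s' * (V s' - V' s')))
          - ∑ s, ν s * V s := by
        have e : ∀ s, ν s * ((∑ a, π' s a * Q' s a)
            + (∑ a, π' s a * (γ * ∑ s', P s a s' * (V s' - V' s'))) - V s)
            = ν s * V' s + ν s * (∑ a, π' s a * (γ * ∑ s', P s a s' * (V s' - V' s')))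
              - ν s * V s := fun s => by rw [← hV' s]; ring
        simp only [e]
        rw [Finset.sum_sub_distrib, Finset.sum_add_distrib]
    _ = (∑ s, ν s * V' s) + γ * ∑ s', ν s' * (V s' - V' s') - ∑ s, ν s * V s := by
        rw [tri]
    _ = (1 - γ) * ((∑ s, ν s * V' s) - ∑ s, ν s * V s) := by
        rw [Finset.mul_sum, ← Finset.sum_sub_distrib, ← Finset.sum_add_distrib,
          Finset.mul_sum, ← Finset.sum_sub_distrib]
        refine Finset.sum_congr rfl (fun s _ => ?_)
        ring
end

section
/- Let f_β(x) = (1/√m) ∑_{j=1}^m u_j max(β_j^T x, 0) be a two-layer ReLU network with fixed outer weights u_j ∈ {−1, +1} and let f⁰_β(x) = (1/√m) ∑_{j=1}^m u_j 1{β_j(0)^T x > 0} β_j^T x be its linearization at initialization β(0). If ‖x‖₂ ≤ 1, then |f⁰_β(x) − f_β(x)| ≤ (1/√m) ∑_{j=1}^m 1{|β_j(0)^T x| ≤ ‖β_j − β_j(0)‖₂} · ‖β_j − β_j(0)‖₂. -/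
open scoped RealInnerProductSpace

/-- The gap between a two-layer ReLU network and its linearization at initialization
is controlled by lattice crossings. -/
theorem stmt_11 (d m : ℕ) (hm : 0 < m)
    (u : Fin m → ℝ) (hu : ∀ j, u j = 1 ∨ u j = -1)
    (β β₀ : Fin m → EuclideanSpace ℝ (Fin d))
    (x : EuclideanSpace ℝ (Fin d)) (hx : ‖x‖ ≤ 1) :
    |(1 / Real.sqrt m) * ∑ j, u j * (if (0:ℝ) < ⟪β₀ j, x⟫ then ⟪β j, x⟫ else 0)
        - (1 / Real.sqrt m) * ∑ j, u j * max ⟪β j, x⟫ 0|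
      ≤ (1 / Real.sqrt m) *
          ∑ j, (if |⟪β₀ j, x⟫| ≤ ‖β j - β₀ j‖ then ‖β j - β₀ j‖ else 0) := by
  have hs : (0:ℝ) ≤ 1 / Real.sqrt m := by positivity
  rw [← mul_sub, abs_mul, abs_of_nonneg hs]
  gcongr
  rw [← Finset.sum_sub_distrib]
  refine (Finset.abs_sum_le_sum_abs _ _).trans (Finset.sum_le_sum ?_)
  intro j _
  have hab : |⟪β j, x⟫ - ⟪β₀ j, x⟫| ≤ ‖β j - β₀ j‖ := by
    have h1 := abs_real_inner_le_norm (β j - β₀ j) x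
    rw [inner_sub_left] at h1
    calc |⟪β j, x⟫ - ⟪β₀ j, x⟫| ≤ ‖β j - β₀ j‖ * ‖x‖ := h1
    _ ≤ ‖β j - β₀ j‖ * 1 := by gcongr
    _ = _ := mul_one _
  have hu' : |u j| = 1 := by rcases hu j with h | h <;> simp [h]
  rw [← mul_sub, abs_mul, hu', one_mul]
  set a := ⟪β₀ j, x⟫ with ha'
  set b := ⟪β j, x⟫ with hb'
  by_cases ha : (0:ℝ) < a
  · by_cases hb : (0:ℝ) < b
    · simp only [if_pos ha, max_eq_left hb.le, sub_self, abs_zero]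
      split
      · exact norm_nonneg _
      · exact le_refl 0
    · push_neg at hb
      have hcond : |a| ≤ ‖β j - β₀ j‖ := by
        calc |a| = a := abs_of_pos ha
        _ ≤ a - b := by linarith
        _ ≤ |b - a| := by rw [abs_sub_comm]; exact le_abs_self _
        _ ≤ _ := hab
      rw [if_pos ha, max_eq_right hb, if_pos hcond]
      calc |b - 0| = -b := by rw [sub_zero, abs_of_nonpos hb]
      _ ≤ a - b := by linarith
      _ ≤ |b - a| := by rw [abs_sub_comm]; exact le_abs_self _
      _ ≤ _ := hab
  · push_neg at ha
    by_cases hb : (0:ℝ) < b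
    · have hcond : |a| ≤ ‖β j - β₀ j‖ := by
        calc |a| = -a := abs_of_nonpos ha
        _ ≤ b - a := by linarith
        _ ≤ |b - a| := le_abs_self _
        _ ≤ _ := hab
      rw [if_neg (not_lt.mpr ha), max_eq_left hb.le, if_pos hcond]
      calc |0 - b| = b := by rw [zero_sub, abs_neg, abs_of_pos hb]
      _ ≤ b - a := by linarith
      _ ≤ |b - a| := le_abs_self _
      _ ≤ _ := hab
    · push_neg at hb
      simp only [if_neg (not_lt.mpr ha), max_eq_right hb, sub_self, abs_zero]
      split
      · exact norm_nonneg _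
      · exact le_refl 0
end
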